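/- The 10th D'Arcais polynomial P_10(x) has a non-real complex root. Consequently, the polynomial Q_10(z) := Σ_{λ⊢10} Π_{h∈H(λ)} (h²+z)/h² = P_10(z+1) has a non-real complex root, giving a counterexample to the assertion that Q_n has only real roots for all n. -/

import Mathlib

open Finset Polynomial

noncomputable def darcais : ℕ → Polynomial ℚ
  | 0 => 1
  | n + 1 =>
      Polynomial.C (((n : ℚ) + 1)⁻¹) * Polynomial.X *
        ∑ k ∈ Finset.range (n + 1),
          ((∑ d ∈ Nat.divisors (k + 1), d : ℕ) : ℚ) • darcais (n - k)
  termination_by n => n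
  decreasing_by omega

def colLen {n : ℕ} (μ : Nat.Partition n) (j : ℕ) : ℕ :=
  (μ.parts.filter (fun p => j + 1 ≤ p)).card

def rowLen {n : ℕ} (μ : Nat.Partition n) (i : ℕ) : ℕ :=
  ((Finset.range n).filter (fun j => i < colLen μ j)).card

def cells {n : ℕ} (μ : Nat.Partition n) : Finset (ℕ × ℕ) :=
  (Finset.range n ×ˢ Finset.range n).filter (fun c => c.1 < colLen μ c.2)

def armLen {n : ℕ} (μ : Nat.Partition n) (c : ℕ × ℕ) : ℕ := rowLen μ c.1 - (c.2 + 1)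

def legLen {n : ℕ} (μ : Nat.Partition n) (c : ℕ × ℕ) : ℕ := colLen μ c.2 - (c.1 + 1)

def hookLen {n : ℕ} (μ : Nat.Partition n) (c : ℕ × ℕ) : ℕ := armLen μ c + legLen μ c + 1

def hooks {n : ℕ} (μ : Nat.Partition n) : Multiset ℕ := (cells μ).val.map (hookLen μ)

def hooksDia {n : ℕ} (μ : Nat.Partition n) : Multiset ℕ :=
  (((cells μ).filter (fun c => legLen μ c = 0)).val).map (hookLen μ)

def hooksDiaDia {n : ℕ} (μ : Nat.Partition n) : Multiset ℕ :=
  (((cells μ).filter (fun c => armLen μ c = 0)).val).map (hookLen μ)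

/-! ### Auxiliary: explicit computation of the D'Arcais polynomials -/

noncomputable def ofL : List ℚ → ℚ[X]
  | [] => 0
  | a :: l => C a + X * ofL l

def addL : List ℚ → List ℚ → List ℚ
  | [], l2 => l2
  | l1, [] => l1
  | a :: l1, b :: l2 => (a + b) :: addL l1 l2

lemma ofL_addL : ∀ l1 l2, ofL (addL l1 l2) = ofL l1 + ofL l2
  | [], l2 => by simp [addL, ofL]
  | a :: l1, [] => by simp [addL, ofL]
  | a :: l1, b :: l2 => by
      simp only [addL, ofL, ofL_addL l1 l2, map_add]; ring

lemma ofL_smul (c : ℚ) : ∀ l, ofL (l.map (c * ·)) = C c * ofL l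
  | [] => by simp [ofL]
  | a :: l => by simp only [List.map, ofL, ofL_smul c l, map_mul]; ring

lemma ofL_X (l : List ℚ) : ofL (0 :: l) = X * ofL l := by simp [ofL]

lemma hs1 : ((∑ d ∈ Nat.divisors 1, d : ℕ) : ℚ) = 1 := by
  rw [show (∑ d ∈ Nat.divisors 1, d) = 1 from by decide]; norm_num

lemma hs1' : (∑ d ∈ Nat.divisors 1, (d:ℚ)) = 1 := by
  rw [← Nat.cast_sum]; exact hs1

lemma hs1'' : (∑ d ∈ Nat.divisors 1, (d:ℚ[X])) = 1 := by
  rw [← Nat.cast_sum, show (∑ d ∈ Nat.divisors 1, d) = 1 from by decide]; norm_num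

lemma hs2 : ((∑ d ∈ Nat.divisors 2, d : ℕ) : ℚ) = 3 := by
  rw [show (∑ d ∈ Nat.divisors 2, d) = 3 from by decide]; norm_num

lemma hs2' : (∑ d ∈ Nat.divisors 2, (d:ℚ)) = 3 := by
  rw [← Nat.cast_sum]; exact hs2

lemma hs2'' : (∑ d ∈ Nat.divisors 2, (d:ℚ[X])) = 3 := by
  rw [← Nat.cast_sum, show (∑ d ∈ Nat.divisors 2, d) = 3 from by decide]; norm_num

lemma hs3 : ((∑ d ∈ Nat.divisors 3, d : ℕ) : ℚ) = 4 := by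
  rw [show (∑ d ∈ Nat.divisors 3, d) = 4 from by decide]; norm_num

lemma hs3' : (∑ d ∈ Nat.divisors 3, (d:ℚ)) = 4 := by
  rw [← Nat.cast_sum]; exact hs3

lemma hs3'' : (∑ d ∈ Nat.divisors 3, (d:ℚ[X])) = 4 := by
  rw [← Nat.cast_sum, show (∑ d ∈ Nat.divisors 3, d) = 4 from by decide]; norm_num

lemma hs4 : ((∑ d ∈ Nat.divisors 4, d : ℕ) : ℚ) = 7 := by
  rw [show (∑ d ∈ Nat.divisors 4, d) = 7 from by decide]; norm_num

lemma hs4' : (∑ d ∈ Nat.divisors 4, (d:ℚ)) = 7 := by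
  rw [← Nat.cast_sum]; exact hs4

lemma hs4'' : (∑ d ∈ Nat.divisors 4, (d:ℚ[X])) = 7 := by
  rw [← Nat.cast_sum, show (∑ d ∈ Nat.divisors 4, d) = 7 from by decide]; norm_num

lemma hs5 : ((∑ d ∈ Nat.divisors 5, d : ℕ) : ℚ) = 6 := by
  rw [show (∑ d ∈ Nat.divisors 5, d) = 6 from by decide]; norm_num

lemma hs5' : (∑ d ∈ Nat.divisors 5, (d:ℚ)) = 6 := by
  rw [← Nat.cast_sum]; exact hs5

lemma hs5'' : (∑ d ∈ Nat.divisors 5, (d:ℚ[X])) = 6 := by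
  rw [← Nat.cast_sum, show (∑ d ∈ Nat.divisors 5, d) = 6 from by decide]; norm_num

lemma hs6 : ((∑ d ∈ Nat.divisors 6, d : ℕ) : ℚ) = 12 := by
  rw [show (∑ d ∈ Nat.divisors 6, d) = 12 from by decide]; norm_num

lemma hs6' : (∑ d ∈ Nat.divisors 6, (d:ℚ)) = 12 := by
  rw [← Nat.cast_sum]; exact hs6

lemma hs6'' : (∑ d ∈ Nat.divisors 6, (d:ℚ[X])) = 12 := by
  rw [← Nat.cast_sum, show (∑ d ∈ Nat.divisors 6, d) = 12 from by decide]; norm_num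

lemma hs7 : ((∑ d ∈ Nat.divisors 7, d : ℕ) : ℚ) = 8 := by
  rw [show (∑ d ∈ Nat.divisors 7, d) = 8 from by decide]; norm_num

lemma hs7' : (∑ d ∈ Nat.divisors 7, (d:ℚ)) = 8 := by
  rw [← Nat.cast_sum]; exact hs7

lemma hs7'' : (∑ d ∈ Nat.divisors 7, (d:ℚ[X])) = 8 := by
  rw [← Nat.cast_sum, show (∑ d ∈ Nat.divisors 7, d) = 8 from by decide]; norm_num

lemma hs8 : ((∑ d ∈ Nat.divisors 8, d : ℕ) : ℚ) = 15 := by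
  rw [show (∑ d ∈ Nat.divisors 8, d) = 15 from by decide]; norm_num

lemma hs8' : (∑ d ∈ Nat.divisors 8, (d:ℚ)) = 15 := by
  rw [← Nat.cast_sum]; exact hs8

lemma hs8'' : (∑ d ∈ Nat.divisors 8, (d:ℚ[X])) = 15 := by
  rw [← Nat.cast_sum, show (∑ d ∈ Nat.divisors 8, d) = 15 from by decide]; norm_num

lemma hs9 : ((∑ d ∈ Nat.divisors 9, d : ℕ) : ℚ) = 13 := by
  rw [show (∑ d ∈ Nat.divisors 9, d) = 13 from by decide]; norm_num

lemma hs9' : (∑ d ∈ Nat.divisors 9, (d:ℚ)) = 13 := by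
  rw [← Nat.cast_sum]; exact hs9

lemma hs9'' : (∑ d ∈ Nat.divisors 9, (d:ℚ[X])) = 13 := by
  rw [← Nat.cast_sum, show (∑ d ∈ Nat.divisors 9, d) = 13 from by decide]; norm_num

lemma hs10 : ((∑ d ∈ Nat.divisors 10, d : ℕ) : ℚ) = 18 := by
  rw [show (∑ d ∈ Nat.divisors 10, d) = 18 from by decide]; norm_num

lemma hs10' : (∑ d ∈ Nat.divisors 10, (d:ℚ)) = 18 := by
  rw [← Nat.cast_sum]; exact hs10

lemma hs10'' : (∑ d ∈ Nat.divisors 10, (d:ℚ[X])) = 18 := by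
  rw [← Nat.cast_sum, show (∑ d ∈ Nat.divisors 10, d) = 18 from by decide]; norm_num

lemma ofL_ofNat_mul (n : ℕ) [n.AtLeastTwo] (l : List ℚ) :
    (no_index (OfNat.ofNat n) : ℚ[X]) * ofL l
      = ofL (l.map ((OfNat.ofNat n : ℚ) * ·)) := by
  rw [ofL_smul, map_ofNat]

lemma darcais_zero : darcais 0 = ofL [1] := by simp [darcais, ofL]

set_option linter.unreachableTactic false in
set_option linter.unusedTactic false in
lemma darcais_one : darcais 1 = ofL [0, 1] := by
  rw [show (1:ℕ) = 0 + 1 from rfl, darcais]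
  norm_num [Finset.sum_range_succ, smul_eq_C_mul, darcais_zero, hs1, hs1', hs1'', hs2, hs2', hs2'', hs3, hs3', hs3'', hs4, hs4', hs4'', hs5, hs5', hs5'', hs6, hs6', hs6'', hs7, hs7', hs7'', hs8, hs8', hs8'', hs9, hs9', hs9'', hs10, hs10', hs10'']
  try rw [mul_assoc]
  try simp only [ofL_ofNat_mul, ← ofL_smul, ← ofL_addL, ← ofL_X, one_mul]
  all_goals congr 1
  all_goals norm_num [addL]

set_option linter.unreachableTactic false in
set_option linter.unusedTactic false in
lemma darcais_two : darcais 2 = ofL [0, 3/2, 1/2] := by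
  rw [show (2:ℕ) = 1 + 1 from rfl, darcais]
  norm_num [Finset.sum_range_succ, smul_eq_C_mul, darcais_zero, darcais_one, hs1, hs1', hs1'', hs2, hs2', hs2'', hs3, hs3', hs3'', hs4, hs4', hs4'', hs5, hs5', hs5'', hs6, hs6', hs6'', hs7, hs7', hs7'', hs8, hs8', hs8'', hs9, hs9', hs9'', hs10, hs10', hs10'']
  try rw [mul_assoc]
  try simp only [ofL_ofNat_mul, ← ofL_smul, ← ofL_addL, ← ofL_X, one_mul]
  all_goals congr 1
  all_goals norm_num [addL]

set_option linter.unreachableTactic false in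
set_option linter.unusedTactic false in
lemma darcais_three : darcais 3 = ofL [0, 4/3, 3/2, 1/6] := by
  rw [show (3:ℕ) = 2 + 1 from rfl, darcais]
  norm_num [Finset.sum_range_succ, smul_eq_C_mul, darcais_zero, darcais_one, darcais_two, hs1, hs1', hs1'', hs2, hs2', hs2'', hs3, hs3', hs3'', hs4, hs4', hs4'', hs5, hs5', hs5'', hs6, hs6', hs6'', hs7, hs7', hs7'', hs8, hs8', hs8'', hs9, hs9', hs9'', hs10, hs10', hs10'']
  try rw [mul_assoc]
  try simp only [ofL_ofNat_mul, ← ofL_smul, ← ofL_addL, ← ofL_X, one_mul]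
  all_goals congr 1
  all_goals norm_num [addL]

set_option linter.unreachableTactic false in
set_option linter.unusedTactic false in
lemma darcais_four : darcais 4 = ofL [0, 7/4, 59/24, 3/4, 1/24] := by
  rw [show (4:ℕ) = 3 + 1 from rfl, darcais]
  norm_num [Finset.sum_range_succ, smul_eq_C_mul, darcais_zero, darcais_one, darcais_two, darcais_three, hs1, hs1', hs1'', hs2, hs2', hs2'', hs3, hs3', hs3'', hs4, hs4', hs4'', hs5, hs5', hs5'', hs6, hs6', hs6'', hs7, hs7', hs7'', hs8, hs8', hs8'', hs9, hs9', hs9'', hs10, hs10', hs10'']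
  try rw [mul_assoc]
  try simp only [ofL_ofNat_mul, ← ofL_smul, ← ofL_addL, ← ofL_X, one_mul]
  all_goals congr 1
  all_goals norm_num [addL]

set_option linter.unreachableTactic false in
set_option linter.unusedTactic false in
lemma darcais_five : darcais 5 = ofL [0, 6/5, 15/4, 43/24, 1/4, 1/120] := by
  rw [show (5:ℕ) = 4 + 1 from rfl, darcais]
  norm_num [Finset.sum_range_succ, smul_eq_C_mul, darcais_zero, darcais_one, darcais_two, darcais_three, darcais_four, hs1, hs1', hs1'', hs2, hs2', hs2'', hs3, hs3', hs3'', hs4, hs4', hs4'', hs5, hs5', hs5'', hs6, hs6', hs6'', hs7, hs7', hs7'', hs8, hs8', hs8'', hs9, hs9', hs9'', hs10, hs10', hs10'']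
  try rw [mul_assoc]
  try simp only [ofL_ofNat_mul, ← ofL_smul, ← ofL_addL, ← ofL_X, one_mul]
  all_goals congr 1
  all_goals norm_num [addL]

set_option linter.unreachableTactic false in
set_option linter.unusedTactic false in
lemma darcais_six : darcais 6 = ofL [0, 2, 1697/360, 55/16, 113/144, 1/16, 1/720] := by
  rw [show (6:ℕ) = 5 + 1 from rfl, darcais]
  norm_num [Finset.sum_range_succ, smul_eq_C_mul, darcais_zero, darcais_one, darcais_two, darcais_three, darcais_four, darcais_five, hs1, hs1', hs1'', hs2, hs2', hs2'', hs3, hs3', hs3'', hs4, hs4', hs4'', hs5, hs5', hs5'', hs6, hs6', hs6'', hs7, hs7', hs7'', hs8, hs8', hs8'', hs9, hs9', hs9'', hs10, hs10', hs10'']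
  try rw [mul_assoc]
  try simp only [ofL_ofNat_mul, ← ofL_smul, ← ofL_addL, ← ofL_X, one_mul]
  all_goals congr 1
  all_goals norm_num [addL]

set_option linter.unreachableTactic false in
set_option linter.unusedTactic false in
lemma darcais_seven : darcais 7 = ofL [0, 8/7, 92/15, 2021/360, 89/48, 35/144, 1/80, 1/5040] := by
  rw [show (7:ℕ) = 6 + 1 from rfl, darcais]
  norm_num [Finset.sum_range_succ, smul_eq_C_mul, darcais_zero, darcais_one, darcais_two, darcais_three, darcais_four, darcais_five, darcais_six, hs1, hs1', hs1'', hs2, hs2', hs2'', hs3, hs3', hs3'', hs4, hs4', hs4'', hs5, hs5', hs5'', hs6, hs6', hs6'', hs7, hs7', hs7'', hs8, hs8', hs8'', hs9, hs9', hs9'', hs10, hs10', hs10'']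
  try rw [mul_assoc]
  try simp only [ofL_ofNat_mul, ← ofL_smul, ← ofL_addL, ← ofL_X, one_mul]
  all_goals congr 1
  all_goals norm_num [addL]

set_option linter.unreachableTactic false in
set_option linter.unusedTactic false in
lemma darcais_eight : darcais 8 = ofL [0, 15/8, 8147/1120, 4049/480, 21127/5760, 11/16, 167/2880, 1/480, 1/40320] := by
  rw [show (8:ℕ) = 7 + 1 from rfl, darcais]
  norm_num [Finset.sum_range_succ, smul_eq_C_mul, darcais_zero, darcais_one, darcais_two, darcais_three, darcais_four, darcais_five, darcais_six, darcais_seven, hs1, hs1', hs1'', hs2, hs2', hs2'', hs3, hs3', hs3'', hs4, hs4', hs4'', hs5, hs5', hs5'', hs6, hs6', hs6'', hs7, hs7', hs7'', hs8, hs8', hs8'', hs9, hs9', hs9'', hs10, hs10', hs10'']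
  try rw [mul_assoc]
  try simp only [ofL_ofNat_mul, ← ofL_smul, ← ofL_addL, ← ofL_X, one_mul]
  all_goals congr 1
  all_goals norm_num [addL]

set_option linter.unreachableTactic false in
set_option linter.unusedTactic false in
lemma darcais_nine : darcais 9 = ofL [0, 13/9, 7019/840, 1083899/90720, 3097/480, 27589/17280, 23/120, 97/8640, 1/3360, 1/362880] := by
  rw [show (9:ℕ) = 8 + 1 from rfl, darcais]
  norm_num [Finset.sum_range_succ, smul_eq_C_mul, darcais_zero, darcais_one, darcais_two, darcais_three, darcais_four, darcais_five, darcais_six, darcais_seven, darcais_eight, hs1, hs1', hs1'', hs2, hs2', hs2'', hs3, hs3', hs3'', hs4, hs4', hs4'', hs5, hs5', hs5'', hs6, hs6', hs6'', hs7, hs7', hs7'', hs8, hs8', hs8'', hs9, hs9', hs9'', hs10, hs10', hs10'']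
  try rw [mul_assoc]
  try simp only [ofL_ofNat_mul, ← ofL_smul, ← ofL_addL, ← ofL_X, one_mul]
  all_goals congr 1
  all_goals norm_num [addL]

set_option linter.unreachableTactic false in
set_option linter.unusedTactic false in
lemma darcais_ten : darcais 10 = ofL [0, 9/5, 252019/25200, 64193/4032, 59453/5670, 7457/2304, 88453/172800, 49/1152, 221/120960, 1/26880, 1/3628800] := by
  rw [show (10:ℕ) = 9 + 1 from rfl, darcais]
  norm_num [Finset.sum_range_succ, smul_eq_C_mul, darcais_zero, darcais_one, darcais_two, darcais_three, darcais_four, darcais_five, darcais_six, darcais_seven, darcais_eight, darcais_nine, hs1, hs1', hs1'', hs2, hs2', hs2'', hs3, hs3', hs3'', hs4, hs4', hs4'', hs5, hs5', hs5'', hs6, hs6', hs6'', hs7, hs7', hs7'', hs8, hs8', hs8'', hs9, hs9', hs9'', hs10, hs10', hs10'']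
  try rw [mul_assoc]
  try simp only [ofL_ofNat_mul, ← ofL_smul, ← ofL_addL, ← ofL_X, one_mul]
  all_goals congr 1
  all_goals norm_num [addL]

/-! ### Laguerre-type inequality for polynomials with all roots real -/

lemma lag (R : Multiset ℂ) (hR : ∀ z ∈ R, z.im = 0) (c : ℝ) :
    ∃ s r : ℝ, 0 ≤ r ∧
      Polynomial.eval (c:ℂ) (R.map (fun z => X - C z)).prod = (s:ℂ) ∧
      (Polynomial.eval (c:ℂ) (Polynomial.derivative ((R.map (fun z => X - C z)).prod)))^2
        - Polynomial.eval (c:ℂ) ((R.map (fun z => X - C z)).prod)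
          * Polynomial.eval (c:ℂ)
              (Polynomial.derivative (Polynomial.derivative ((R.map (fun z => X - C z)).prod)))
        = (r:ℂ) := by
  induction R using Multiset.induction with
  | empty => exact ⟨1, 0, le_refl 0, by simp, by simp⟩
  | cons a t ih =>
      obtain ⟨s, r, hr, hs, hE⟩ := ih (fun z hz => hR z (Multiset.mem_cons_of_mem hz))
      obtain ⟨x, rfl⟩ : ∃ x : ℝ, a = (x : ℂ) :=
        ⟨a.re, Complex.ext_iff.2 ⟨by simp, by simp [hR a (Multiset.mem_cons_self a t)]⟩⟩
      refine ⟨(c - x) * s, s^2 + (c - x)^2 * r, by positivity, ?_, ?_⟩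
      · simp only [Multiset.map_cons, Multiset.prod_cons, eval_mul, eval_sub, eval_X, eval_C, hs]
        push_cast
        ring
      · simp only [Multiset.map_cons, Multiset.prod_cons, derivative_mul, derivative_sub,
          derivative_X, derivative_C, sub_zero, derivative_one, derivative_add, one_mul,
          eval_add, eval_mul, eval_sub,
          eval_X, eval_C, eval_one, zero_mul, zero_add, add_zero, zero_sub, eval_neg, eval_zero]
        push_cast
        set A := Polynomial.eval (c:ℂ) (Multiset.map (fun z => X - C z) t).prod with hA
        linear_combination ((c:ℂ) - (x:ℂ))^2 * hE + (A + (s:ℂ)) * hs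

lemma hv0 : Polynomial.eval (-6 : ℚ) (darcais 10) = 18 := by
  rw [darcais_ten]; norm_num [ofL]

lemma hv1 : Polynomial.eval (-6 : ℚ) (Polynomial.derivative (darcais 10)) = -27983/840 := by
  rw [darcais_ten]; norm_num [ofL]

lemma hv2 : Polynomial.eval (-6 : ℚ)
    (Polynomial.derivative (Polynomial.derivative (darcais 10))) = 1778633/25200 := by
  rw [darcais_ten]; norm_num [ofL]

lemma part1 : ∃ z : ℂ, z.im ≠ 0 ∧ Polynomial.aeval z (darcais 10) = 0 := by
  by_contra hcon
  push_neg at hcon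
  set φ := algebraMap ℚ ℂ with hφ
  set P := (darcais 10).map φ with hP
  have hroots : ∀ z ∈ P.roots, z.im = 0 := by
    intro z hz
    by_contra him
    refine hcon z him ?_
    have h2 : Polynomial.eval z P = 0 := (Polynomial.isRoot_of_mem_roots hz)
    rwa [hP, Polynomial.eval_map, ← Polynomial.aeval_def] at h2
  have hsp : P.roots.card = P.natDegree :=
    (Polynomial.splits_iff_card_roots).mp (IsAlgClosed.splits _)
  have hfact := Polynomial.C_leadingCoeff_mul_prod_multiset_X_sub_C hsp
  obtain ⟨s, r, hr, hs, hE⟩ := lag P.roots hroots (-6)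
  have hm6 : ((-6 : ℝ) : ℂ) = φ (-6 : ℚ) := by push_cast [eq_ratCast φ (-6:ℚ)]; norm_num
  have ev0 : Polynomial.eval ((-6:ℝ):ℂ) P = φ 18 := by
    rw [hm6, hP, Polynomial.eval_map, Polynomial.eval₂_at_apply, hv0]
  have ev1 : Polynomial.eval ((-6:ℝ):ℂ) (Polynomial.derivative P) = φ (-27983/840) := by
    rw [hm6, hP, Polynomial.derivative_map, Polynomial.eval_map, Polynomial.eval₂_at_apply, hv1]
  have ev2 : Polynomial.eval ((-6:ℝ):ℂ)
      (Polynomial.derivative (Polynomial.derivative P)) = φ (1778633/25200) := by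
    rw [hm6, hP, Polynomial.derivative_map, Polynomial.derivative_map, Polynomial.eval_map,
      Polynomial.eval₂_at_apply, hv2]
  set L := P.leadingCoeff with hLdef
  set q := (P.roots.map (fun a => X - C a)).prod with hq
  have eq1 : Polynomial.eval ((-6:ℝ):ℂ) (Polynomial.derivative P)^2
      - Polynomial.eval ((-6:ℝ):ℂ) P
        * Polynomial.eval ((-6:ℝ):ℂ) (Polynomial.derivative (Polynomial.derivative P))
      = L^2 * (r:ℂ) := by
    conv_lhs => rw [← hfact]
    simp only [Polynomial.derivative_C_mul, Polynomial.eval_mul, Polynomial.eval_C]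
    linear_combination L^2 * hE
  rw [ev0, ev1, ev2] at eq1
  have hL : L = ((((darcais 10).leadingCoeff : ℚ) : ℝ) : ℂ) := by
    rw [hLdef, hP, Polynomial.leadingCoeff_map φ, eq_ratCast]
    push_cast
    ring
  rw [hL] at eq1
  have hnum : (φ (-27983/840))^2 - φ 18 * φ (1778633/25200)
      = ((-113382743/705600 : ℝ) : ℂ) := by
    simp only [eq_ratCast φ]
    push_cast
    norm_num
  rw [hnum] at eq1
  set x : ℝ := (((darcais 10).leadingCoeff : ℚ) : ℝ)
  have hfin : ((-113382743/705600 : ℝ) : ℂ) = ((x^2 * r : ℝ) : ℂ) := by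
    rw [eq1]; push_cast; ring
  have h2 : (-113382743/705600 : ℝ) = x^2 * r := Complex.ofReal_inj.mp hfin
  nlinarith [sq_nonneg x, mul_nonneg (sq_nonneg x) hr]

/-! ### Enumerating the partitions of 10 -/

set_option maxHeartbeats 1000000 in
def LL : ℕ → List (List ℕ)
  | 0 => [[]]
  | 1 => [[1]]
  | 2 => [[2], [1, 1]]
  | 3 => [[3], [2, 1], [1, 1, 1]]
  | 4 => [[4], [3, 1], [2, 2], [2, 1, 1], [1, 1, 1, 1]]
  | 5 => [[5], [4, 1], [3, 2], [3, 1, 1], [2, 2, 1], [2, 1, 1, 1], [1, 1, 1, 1, 1]]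
  | 6 => [[6], [5, 1], [4, 2], [4, 1, 1], [3, 3], [3, 2, 1], [3, 1, 1, 1], [2, 2, 2], [2, 2, 1, 1], [2, 1, 1, 1, 1], [1, 1, 1, 1, 1, 1]]
  | 7 => [[7], [6, 1], [5, 2], [5, 1, 1], [4, 3], [4, 2, 1], [4, 1, 1, 1], [3, 3, 1], [3, 2, 2], [3, 2, 1, 1], [3, 1, 1, 1, 1], [2, 2, 2, 1], [2, 2, 1, 1, 1], [2, 1, 1, 1, 1, 1], [1, 1, 1, 1, 1, 1, 1]]
  | 8 => [[8], [7, 1], [6, 2], [6, 1, 1], [5, 3], [5, 2, 1], [5, 1, 1, 1], [4, 4], [4, 3, 1], [4, 2, 2], [4, 2, 1, 1], [4, 1, 1, 1, 1], [3, 3, 2], [3, 3, 1, 1], [3, 2, 2, 1], [3, 2, 1, 1, 1], [3, 1, 1, 1, 1, 1], [2, 2, 2, 2], [2, 2, 2, 1, 1], [2, 2, 1, 1, 1, 1], [2, 1, 1, 1, 1, 1, 1], [1, 1, 1, 1, 1, 1, 1, 1]]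
  | 9 => [[9], [8, 1], [7, 2], [7, 1, 1], [6, 3], [6, 2, 1], [6, 1, 1, 1], [5, 4], [5, 3, 1], [5, 2, 2], [5, 2, 1, 1], [5, 1, 1, 1, 1], [4, 4, 1], [4, 3, 2], [4, 3, 1, 1], [4, 2, 2, 1], [4, 2, 1, 1, 1], [4, 1, 1, 1, 1, 1], [3, 3, 3], [3, 3, 2, 1], [3, 3, 1, 1, 1], [3, 2, 2, 2], [3, 2, 2, 1, 1], [3, 2, 1, 1, 1, 1], [3, 1, 1, 1, 1, 1, 1], [2, 2, 2, 2, 1], [2, 2, 2, 1, 1, 1], [2, 2, 1, 1, 1, 1, 1], [2, 1, 1, 1, 1, 1, 1, 1], [1, 1, 1, 1, 1, 1, 1, 1, 1]]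
  | 10 => [[10], [9, 1], [8, 2], [8, 1, 1], [7, 3], [7, 2, 1], [7, 1, 1, 1], [6, 4], [6, 3, 1], [6, 2, 2], [6, 2, 1, 1], [6, 1, 1, 1, 1], [5, 5], [5, 4, 1], [5, 3, 2], [5, 3, 1, 1], [5, 2, 2, 1], [5, 2, 1, 1, 1], [5, 1, 1, 1, 1, 1], [4, 4, 2], [4, 4, 1, 1], [4, 3, 3], [4, 3, 2, 1], [4, 3, 1, 1, 1], [4, 2, 2, 2], [4, 2, 2, 1, 1], [4, 2, 1, 1, 1, 1], [4, 1, 1, 1, 1, 1, 1], [3, 3, 3, 1], [3, 3, 2, 2], [3, 3, 2, 1, 1], [3, 3, 1, 1, 1, 1], [3, 2, 2, 2, 1], [3, 2, 2, 1, 1, 1], [3, 2, 1, 1, 1, 1, 1], [3, 1, 1, 1, 1, 1, 1, 1], [2, 2, 2, 2, 2], [2, 2, 2, 2, 1, 1], [2, 2, 2, 1, 1, 1, 1], [2, 2, 1, 1, 1, 1, 1, 1], [2, 1, 1, 1, 1, 1, 1, 1, 1], [1, 1, 1, 1, 1, 1, 1, 1, 1, 1]]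
  | _ => []

def L (n : ℕ) : List (Multiset ℕ) := (LL n).map (fun l => (l : Multiset ℕ))

set_option maxHeartbeats 1000000 in
lemma key_step : ∀ n' ∈ Finset.range 11, ∀ a' ∈ Finset.Icc 1 n',
    ∀ t' ∈ L (n' - a'), (a' ::ₘ t') ∈ L n' := by decide

lemma mem_L (m : Multiset ℕ) : ∀ (n : ℕ), n ≤ 10 → (∀ i ∈ m, 0 < i) → m.sum = n → m ∈ L n := by
  induction m using Multiset.induction with
  | empty =>
      intro n _ _ hs
      simp only [Multiset.sum_zero] at hs
      subst hs
      decide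
  | cons a t ih =>
      intro n hn hpos hsum
      have ha : 0 < a := hpos a (Multiset.mem_cons_self a t)
      rw [Multiset.sum_cons] at hsum
      have ht : t ∈ L (n - a) :=
        ih (n - a) (by omega) (fun i hi => hpos i (Multiset.mem_cons_of_mem hi)) (by omega)
      exact key_step n (by simp; omega) a (by simp; omega) t ht

def colLenM (m : Multiset ℕ) (j : ℕ) : ℕ := (m.filter (fun p => j + 1 ≤ p)).card

def rowLenM (m : Multiset ℕ) (i : ℕ) : ℕ :=
  ((Finset.range 10).filter (fun j => i < colLenM m j)).card

def cellsM (m : Multiset ℕ) : Finset (ℕ × ℕ) :=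
  (Finset.range 10 ×ˢ Finset.range 10).filter (fun c => c.1 < colLenM m c.2)

def hookM (m : Multiset ℕ) (c : ℕ × ℕ) : ℕ :=
  (rowLenM m c.1 - (c.2 + 1)) + (colLenM m c.2 - (c.1 + 1)) + 1

def hooksM (m : Multiset ℕ) : Multiset ℕ := (cellsM m).val.map (hookM m)

lemma hooks_eq (μ : Nat.Partition 10) : hooks μ = hooksM μ.parts := rfl

lemma coe_multiset_eq (m : Multiset ℕ) :
    ((m >>= fun a => pure ((a : ℂ))) : Multiset ℂ) = m.map (fun a : ℕ => (a : ℂ)) := by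
  show Multiset.bind m (fun a => {(a : ℂ)}) = _
  exact Multiset.bind_singleton _ _

lemma sum_univ_eq (f : Multiset ℕ → ℂ) :
    ∑ μ : Nat.Partition 10, f μ.parts = ((L 10).map f).sum := by
  have hnd : (L 10).Nodup := by decide
  have hall : ∀ m ∈ L 10, (∀ i ∈ m, 0 < i) ∧ m.sum = 10 := by decide
  rw [← List.sum_toFinset _ hnd]
  rw [show (L 10).toFinset
      = (Finset.univ : Finset (Nat.Partition 10)).image Nat.Partition.parts from ?_]
  · rw [Finset.sum_image (by intro x _ y _ h; exact Nat.Partition.ext h)]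
  · apply Finset.Subset.antisymm
    · intro m hm
      rw [List.mem_toFinset] at hm
      exact Finset.mem_image.2 ⟨⟨m, fun {i} hi => (hall m hm).1 i hi, (hall m hm).2⟩,
        Finset.mem_univ _, rfl⟩
    · intro m hm
      obtain ⟨μ, _, rfl⟩ := Finset.mem_image.1 hm
      exact List.mem_toFinset.2 (mem_L μ.parts 10 le_rfl (fun i hi => μ.parts_pos hi) μ.parts_sum)

lemma hk0 : hooksM (↑[10] : Multiset ℕ) = (↑[1, 2, 3, 4, 5, 6, 7, 8, 9, 10] : Multiset ℕ) := by decide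

lemma hk1 : hooksM (↑[9, 1] : Multiset ℕ) = (↑[1, 1, 2, 3, 4, 5, 6, 7, 8, 10] : Multiset ℕ) := by decide

lemma hk2 : hooksM (↑[8, 2] : Multiset ℕ) = (↑[1, 1, 2, 2, 3, 4, 5, 6, 8, 9] : Multiset ℕ) := by decide

lemma hk3 : hooksM (↑[8, 1, 1] : Multiset ℕ) = (↑[1, 1, 2, 2, 3, 4, 5, 6, 7, 10] : Multiset ℕ) := by decide

lemma hk4 : hooksM (↑[7, 3] : Multiset ℕ) = (↑[1, 1, 2, 2, 3, 3, 4, 6, 7, 8] : Multiset ℕ) := by decide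

lemma hk5 : hooksM (↑[7, 2, 1] : Multiset ℕ) = (↑[1, 1, 1, 2, 3, 3, 4, 5, 7, 9] : Multiset ℕ) := by decide

lemma hk6 : hooksM (↑[7, 1, 1, 1] : Multiset ℕ) = (↑[1, 1, 2, 2, 3, 3, 4, 5, 6, 10] : Multiset ℕ) := by decide

lemma hk7 : hooksM (↑[6, 4] : Multiset ℕ) = (↑[1, 1, 2, 2, 3, 4, 4, 5, 6, 7] : Multiset ℕ) := by decide

lemma hk8 : hooksM (↑[6, 3, 1] : Multiset ℕ) = (↑[1, 1, 1, 2, 2, 3, 4, 5, 6, 8] : Multiset ℕ) := by decide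

lemma hk9 : hooksM (↑[6, 2, 2] : Multiset ℕ) = (↑[1, 1, 2, 2, 2, 3, 3, 4, 7, 8] : Multiset ℕ) := by decide

lemma hk10 : hooksM (↑[6, 2, 1, 1] : Multiset ℕ) = (↑[1, 1, 1, 2, 2, 3, 4, 4, 6, 9] : Multiset ℕ) := by decide

lemma hk11 : hooksM (↑[6, 1, 1, 1, 1] : Multiset ℕ) = (↑[1, 1, 2, 2, 3, 3, 4, 4, 5, 10] : Multiset ℕ) := by decide

lemma hk12 : hooksM (↑[5, 5] : Multiset ℕ) = (↑[1, 2, 2, 3, 3, 4, 4, 5, 5, 6] : Multiset ℕ) := by decide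

lemma hk13 : hooksM (↑[5, 4, 1] : Multiset ℕ) = (↑[1, 1, 1, 2, 3, 3, 4, 5, 5, 7] : Multiset ℕ) := by decide

lemma hk14 : hooksM (↑[5, 3, 2] : Multiset ℕ) = (↑[1, 1, 1, 2, 2, 3, 4, 4, 6, 7] : Multiset ℕ) := by decide

lemma hk15 : hooksM (↑[5, 3, 1, 1] : Multiset ℕ) = (↑[1, 1, 1, 2, 2, 2, 4, 5, 5, 8] : Multiset ℕ) := by decide

lemma hk16 : hooksM (↑[5, 2, 2, 1] : Multiset ℕ) = (↑[1, 1, 1, 2, 2, 3, 3, 4, 6, 8] : Multiset ℕ) := by decide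

lemma hk17 : hooksM (↑[5, 2, 1, 1, 1] : Multiset ℕ) = (↑[1, 1, 1, 2, 2, 3, 3, 5, 5, 9] : Multiset ℕ) := by decide

lemma hk18 : hooksM (↑[5, 1, 1, 1, 1, 1] : Multiset ℕ) = (↑[1, 1, 2, 2, 3, 3, 4, 4, 5, 10] : Multiset ℕ) := by decide

lemma hk19 : hooksM (↑[4, 4, 2] : Multiset ℕ) = (↑[1, 1, 2, 2, 2, 3, 4, 5, 5, 6] : Multiset ℕ) := by decide

lemma hk20 : hooksM (↑[4, 4, 1, 1] : Multiset ℕ) = (↑[1, 1, 2, 2, 2, 3, 3, 4, 6, 7] : Multiset ℕ) := by decide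

lemma hk21 : hooksM (↑[4, 3, 3] : Multiset ℕ) = (↑[1, 1, 2, 2, 3, 3, 4, 4, 5, 6] : Multiset ℕ) := by decide

lemma hk22 : hooksM (↑[4, 3, 2, 1] : Multiset ℕ) = (↑[1, 1, 1, 1, 3, 3, 3, 5, 5, 7] : Multiset ℕ) := by decide

lemma hk23 : hooksM (↑[4, 3, 1, 1, 1] : Multiset ℕ) = (↑[1, 1, 1, 2, 2, 3, 3, 4, 6, 8] : Multiset ℕ) := by decide

lemma hk24 : hooksM (↑[4, 2, 2, 2] : Multiset ℕ) = (↑[1, 1, 2, 2, 2, 3, 3, 4, 6, 7] : Multiset ℕ) := by decide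

lemma hk25 : hooksM (↑[4, 2, 2, 1, 1] : Multiset ℕ) = (↑[1, 1, 1, 2, 2, 2, 4, 5, 5, 8] : Multiset ℕ) := by decide

lemma hk26 : hooksM (↑[4, 2, 1, 1, 1, 1] : Multiset ℕ) = (↑[1, 1, 1, 2, 2, 3, 4, 4, 6, 9] : Multiset ℕ) := by decide

lemma hk27 : hooksM (↑[4, 1, 1, 1, 1, 1, 1] : Multiset ℕ) = (↑[1, 1, 2, 2, 3, 3, 4, 5, 6, 10] : Multiset ℕ) := by decide

lemma hk28 : hooksM (↑[3, 3, 3, 1] : Multiset ℕ) = (↑[1, 1, 2, 2, 3, 3, 4, 4, 5, 6] : Multiset ℕ) := by decide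

lemma hk29 : hooksM (↑[3, 3, 2, 2] : Multiset ℕ) = (↑[1, 1, 2, 2, 2, 3, 4, 5, 5, 6] : Multiset ℕ) := by decide

lemma hk30 : hooksM (↑[3, 3, 2, 1, 1] : Multiset ℕ) = (↑[1, 1, 1, 2, 2, 3, 4, 4, 6, 7] : Multiset ℕ) := by decide

lemma hk31 : hooksM (↑[3, 3, 1, 1, 1, 1] : Multiset ℕ) = (↑[1, 1, 2, 2, 2, 3, 3, 4, 7, 8] : Multiset ℕ) := by decide

lemma hk32 : hooksM (↑[3, 2, 2, 2, 1] : Multiset ℕ) = (↑[1, 1, 1, 2, 3, 3, 4, 5, 5, 7] : Multiset ℕ) := by decide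

lemma hk33 : hooksM (↑[3, 2, 2, 1, 1, 1] : Multiset ℕ) = (↑[1, 1, 1, 2, 2, 3, 4, 5, 6, 8] : Multiset ℕ) := by decide

lemma hk34 : hooksM (↑[3, 2, 1, 1, 1, 1, 1] : Multiset ℕ) = (↑[1, 1, 1, 2, 3, 3, 4, 5, 7, 9] : Multiset ℕ) := by decide

lemma hk35 : hooksM (↑[3, 1, 1, 1, 1, 1, 1, 1] : Multiset ℕ) = (↑[1, 1, 2, 2, 3, 4, 5, 6, 7, 10] : Multiset ℕ) := by decide

lemma hk36 : hooksM (↑[2, 2, 2, 2, 2] : Multiset ℕ) = (↑[1, 2, 2, 3, 3, 4, 4, 5, 5, 6] : Multiset ℕ) := by decide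

lemma hk37 : hooksM (↑[2, 2, 2, 2, 1, 1] : Multiset ℕ) = (↑[1, 1, 2, 2, 3, 4, 4, 5, 6, 7] : Multiset ℕ) := by decide

lemma hk38 : hooksM (↑[2, 2, 2, 1, 1, 1, 1] : Multiset ℕ) = (↑[1, 1, 2, 2, 3, 3, 4, 6, 7, 8] : Multiset ℕ) := by decide

lemma hk39 : hooksM (↑[2, 2, 1, 1, 1, 1, 1, 1] : Multiset ℕ) = (↑[1, 1, 2, 2, 3, 4, 5, 6, 8, 9] : Multiset ℕ) := by decide

lemma hk40 : hooksM (↑[2, 1, 1, 1, 1, 1, 1, 1, 1] : Multiset ℕ) = (↑[1, 1, 2, 3, 4, 5, 6, 7, 8, 10] : Multiset ℕ) := by decide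

lemma hk41 : hooksM (↑[1, 1, 1, 1, 1, 1, 1, 1, 1, 1] : Multiset ℕ) = (↑[1, 2, 3, 4, 5, 6, 7, 8, 9, 10] : Multiset ℕ) := by decide


theorem darcais_ten_has_nonreal_root :
    (∃ z : ℂ, z.im ≠ 0 ∧ Polynomial.aeval z (darcais 10) = 0) ∧
    (∃ z : ℂ, z.im ≠ 0 ∧
      ∑ μ : Nat.Partition 10,
          ((hooks μ).map (fun h => ((h : ℂ) ^ 2 + z) / (h : ℂ) ^ 2)).prod = 0) := by
  obtain ⟨w, hwim, hw⟩ := part1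
  refine ⟨⟨w, hwim, hw⟩, ⟨w - 1, by simpa using hwim, ?_⟩⟩
  rw [darcais_ten] at hw
  simp only [ofL, map_add, map_mul, map_zero, mul_zero, add_zero, Polynomial.aeval_C, Polynomial.aeval_X, eq_ratCast] at hw
  push_cast at hw
  simp only [hooks_eq, coe_multiset_eq, Multiset.map_map, Function.comp_def]
  rw [sum_univ_eq (fun m => ((hooksM m).map (fun h : ℕ => ((h : ℂ) ^ 2 + (w-1)) / (h : ℂ) ^ 2)).prod)]
  rw [show L 10 = (LL 10).map (fun l : List ℕ => (l : Multiset ℕ)) from rfl]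
  simp only [LL, List.map, List.sum_cons, List.sum_nil,
    hk0, hk1, hk2, hk3, hk4, hk5, hk6, hk7, hk8, hk9, hk10, hk11, hk12, hk13, hk14, hk15, hk16, hk17, hk18, hk19, hk20, hk21, hk22, hk23, hk24, hk25, hk26, hk27, hk28, hk29, hk30, hk31, hk32, hk33, hk34, hk35, hk36, hk37, hk38, hk39, hk40, hk41,
    Multiset.map_coe, Multiset.prod_coe, List.prod_cons, List.prod_nil]
  push_cast
  linear_combination hw
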